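/- For every integer n > 2, there exists a unique real ζ_n > 1 such that there exists a sequence ε_1,…,ε_n satisfying the recurrence (★) for all j = 1,…,n−1 together with 0 ≤ ε_n < ε_{n−1} < … < ε_2 < ε_1 = 1 and ζ_n = n / (ε_n·P_n'(1−ε_n) + P_n(1−ε_n)). -/

import Mathlib

open Finset

/-- `P_n(t) = ∑_{i=1}^n t^i`. -/
noncomputable def Pn (n : ℕ) (t : ℝ) : ℝ := ∑ i ∈ Finset.Icc 1 n, t ^ i

/-- `P_n'(t) = ∑_{i=1}^n i t^{i-1}`. -/
noncomputable def Pn' (n : ℕ) (t : ℝ) : ℝ := ∑ i ∈ Finset.Icc 1 n, (i : ℝ) * t ^ (i - 1)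

/-- The recurrence (★): for `j = 1, …, n-1`,
`P_n'(1-ε_{j+1}) - P_n'(1-ε_j) = ε_{j+1} P_n'(1-ε_{j+1}) + P_n(1-ε_{j+1}) - j/ζ`. -/
def Recurrence (n : ℕ) (ζ : ℝ) (ε : ℕ → ℝ) : Prop :=
  ∀ j, 1 ≤ j → j ≤ n - 1 →
    Pn' n (1 - ε (j+1)) - Pn' n (1 - ε j)
      = ε (j+1) * Pn' n (1 - ε (j+1)) + Pn n (1 - ε (j+1)) - (j : ℝ) / ζ

noncomputable def gg (n : ℕ) (t : ℝ) : ℝ := ∑ i ∈ Finset.Icc 1 n, ((i : ℝ) - 1) * t ^ i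
noncomputable def aa (n : ℕ) (t : ℝ) : ℝ := (1 - t) * Pn' n t + Pn n t
noncomputable def P2 (n : ℕ) (t : ℝ) : ℝ :=
  ∑ i ∈ Finset.Icc 1 n, (i : ℝ) * ((↑(i - 1) : ℝ) * t ^ (i - 1 - 1))
lemma Pn_eq (n : ℕ) (t : ℝ) : Pn n t = t * Pn' n t - gg n t := by
  unfold Pn Pn' gg
  rw [Finset.mul_sum, ← Finset.sum_sub_distrib]
  refine Finset.sum_congr rfl fun i hi => ?_
  have hi1 : 1 ≤ i := (Finset.mem_Icc.mp hi).1
  have h1 : t ^ (i - 1) * t = t ^ i := by rw [← pow_succ, Nat.sub_add_cancel hi1]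
  rw [← h1]; ring

lemma aa_eq (n : ℕ) (t : ℝ) : aa n t = Pn' n t - gg n t := by
  unfold aa; rw [Pn_eq]; ring
lemma Pn'_zero {n : ℕ} (hn : 1 ≤ n) : Pn' n 0 = 1 := by
  unfold Pn'
  rw [Finset.sum_eq_single_of_mem 1 (Finset.mem_Icc.mpr ⟨le_refl 1, hn⟩)]
  · norm_num
  · intro i hi hne
    have hi1 : 1 ≤ i := (Finset.mem_Icc.mp hi).1
    have : i - 1 ≠ 0 := by omega
    rw [zero_pow this, mul_zero]

lemma Pn_zero (n : ℕ) : Pn n 0 = 0 := by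
  unfold Pn
  refine Finset.sum_eq_zero fun i hi => ?_
  have hi1 : 1 ≤ i := (Finset.mem_Icc.mp hi).1
  exact zero_pow (by omega)

lemma gg_zero (n : ℕ) : gg n 0 = 0 := by
  unfold gg
  refine Finset.sum_eq_zero fun i hi => ?_
  have hi1 : 1 ≤ i := (Finset.mem_Icc.mp hi).1
  rw [zero_pow (by omega : i ≠ 0), mul_zero]

lemma Pn_one (n : ℕ) : Pn n 1 = n := by
  unfold Pn
  simp [Nat.card_Icc]

lemma aa_zero {n : ℕ} (hn : 1 ≤ n) : aa n 0 = 1 := by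
  unfold aa; rw [Pn'_zero hn, Pn_zero]; ring

lemma aa_one (n : ℕ) : aa n 1 = n := by
  unfold aa; rw [Pn_one]; ring

lemma Pn'_sm {n : ℕ} (hn : 2 ≤ n) {s t : ℝ} (hs : 0 ≤ s) (hst : s < t) :
    Pn' n s < Pn' n t := by
  unfold Pn'
  refine Finset.sum_lt_sum (fun i hi => ?_) ⟨2, Finset.mem_Icc.mpr ⟨by omega, hn⟩, ?_⟩
  · exact mul_le_mul_of_nonneg_left (pow_le_pow_left₀ hs hst.le _) (by positivity)
  · norm_num
    exact hst

lemma gg_sm {n : ℕ} (hn : 2 ≤ n) {s t : ℝ} (hs : 0 ≤ s) (hst : s < t) :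
    gg n s < gg n t := by
  unfold gg
  refine Finset.sum_lt_sum (fun i hi => ?_) ⟨2, Finset.mem_Icc.mpr ⟨by omega, hn⟩, ?_⟩
  · have hi1 : 1 ≤ i := (Finset.mem_Icc.mp hi).1
    have hc : (0:ℝ) ≤ (i:ℝ) - 1 := by
      have : (1:ℝ) ≤ (i:ℝ) := by exact_mod_cast hi1
      linarith
    exact mul_le_mul_of_nonneg_left (pow_le_pow_left₀ hs hst.le _) hc
  · norm_num
    exact pow_lt_pow_left₀ hst hs two_ne_zero

lemma gg_mono {n : ℕ} (hn : 2 ≤ n) {s t : ℝ} (hs : 0 ≤ s) (hst : s ≤ t) :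
    gg n s ≤ gg n t := by
  rcases eq_or_lt_of_le hst with h | h
  · rw [h]
  · exact (gg_sm hn hs h).le

lemma Pn'_cont (n : ℕ) : Continuous (Pn' n) := by
  unfold Pn'; exact continuous_finset_sum _ fun i _ => by fun_prop

lemma gg_cont (n : ℕ) : Continuous (gg n) := by
  unfold gg; exact continuous_finset_sum _ fun i _ => by fun_prop

lemma Pn_cont (n : ℕ) : Continuous (Pn n) := by
  unfold Pn; exact continuous_finset_sum _ fun i _ => by fun_prop

lemma aa_cont (n : ℕ) : Continuous (aa n) := by
  unfold aa
  exact ((continuous_const.sub continuous_id).mul (Pn'_cont n)).add (Pn_cont n)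
lemma hasDerivAt_Pn (n : ℕ) (t : ℝ) : HasDerivAt (Pn n) (Pn' n t) t := by
  unfold Pn Pn'
  exact HasDerivAt.fun_sum fun i _ => hasDerivAt_pow i t

lemma hasDerivAt_Pn' (n : ℕ) (t : ℝ) : HasDerivAt (Pn' n) (P2 n t) t := by
  unfold Pn' P2
  exact HasDerivAt.fun_sum fun i _ => (hasDerivAt_pow (i - 1) t).const_mul (i : ℝ)

lemma hasDerivAt_aa (n : ℕ) (t : ℝ) : HasDerivAt (aa n) ((1 - t) * P2 n t) t := by
  unfold aa
  have h1 : HasDerivAt (fun t : ℝ => (1 - t)) (-1) t := by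
    simpa using (hasDerivAt_const t (1:ℝ)).fun_sub (hasDerivAt_id t)
  have h2 := (h1.fun_mul (hasDerivAt_Pn' n t)).fun_add (hasDerivAt_Pn n t)
  refine h2.congr_deriv ?_
  ring

lemma P2_pos {n : ℕ} (hn : 2 ≤ n) {t : ℝ} (ht : 0 ≤ t) : 0 < P2 n t := by
  unfold P2
  refine Finset.sum_pos' (fun i _ => by positivity) ⟨2, Finset.mem_Icc.mpr ⟨by omega, hn⟩, ?_⟩
  norm_num

lemma aa_sm {n : ℕ} (hn : 2 ≤ n) : StrictMonoOn (aa n) (Set.Icc 0 1) := by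
  refine strictMonoOn_of_deriv_pos (convex_Icc 0 1) ?_ ?_
  · exact Continuous.continuousOn (by
      unfold aa
      exact ((continuous_const.sub continuous_id).mul (by
        unfold Pn'; exact continuous_finset_sum _ fun i _ => by fun_prop)).add (by
        unfold Pn; exact continuous_finset_sum _ fun i _ => by fun_prop))
  · intro x hx
    rw [interior_Icc, Set.mem_Ioo] at hx
    rw [(hasDerivAt_aa n x).deriv]
    exact mul_pos (by linarith) (P2_pos hn hx.1.le)

noncomputable def GG (n : ℕ) (t : ℝ) : ℝ := gg n (max t 0) + min t 0

lemma GG_of_nonneg {n : ℕ} {t : ℝ} (ht : 0 ≤ t) : GG n t = gg n t := by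
  unfold GG
  rw [max_eq_left ht, min_eq_right ht, add_zero]

lemma GG_cont (n : ℕ) : Continuous (GG n) := by
  unfold GG
  exact ((gg_cont n).comp (continuous_id.max continuous_const)).add
    (continuous_id.min continuous_const)

lemma GG_sm {n : ℕ} (hn : 2 ≤ n) : StrictMono (GG n) := by
  intro s t hst
  unfold GG
  rcases le_or_gt t 0 with h | h
  · rw [max_eq_right h, max_eq_right (le_of_lt (lt_of_lt_of_le hst h)),
      min_eq_left h, min_eq_left (le_of_lt (lt_of_lt_of_le hst h))]
    linarith
  · have h1 : max s 0 < t := by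
      rcases le_or_gt s 0 with hs | hs
      · rw [max_eq_right hs]; exact h
      · rw [max_eq_left hs.le]; exact hst
    have h2 : gg n (max s 0) < gg n t := gg_sm hn (le_max_right s 0) h1
    have h3 : min s 0 ≤ 0 := min_le_right s 0
    rw [max_eq_left h.le, min_eq_right h.le]
    linarith

lemma gg_sq_le {n : ℕ} (hn : 2 ≤ n) {t : ℝ} (ht : 0 ≤ t) : t ^ 2 ≤ gg n t := by
  unfold gg
  have h2m : 2 ∈ Finset.Icc 1 n := Finset.mem_Icc.mpr ⟨by omega, hn⟩
  have := Finset.single_le_sum (s := Finset.Icc 1 n)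
    (f := fun i : ℕ => ((i : ℝ) - 1) * t ^ i)
    (fun i hi => by
      have hi1 : 1 ≤ i := (Finset.mem_Icc.mp hi).1
      have h1 : (1:ℝ) ≤ (i:ℝ) := by exact_mod_cast hi1
      have h0 : (0:ℝ) ≤ (i:ℝ) - 1 := by linarith
      positivity) h2m
  norm_num at this
  exact this

lemma GG_surj {n : ℕ} (hn : 2 ≤ n) : Function.Surjective (GG n) := by
  intro y
  rcases le_or_gt y 0 with h | h
  · exact ⟨y, by rw [GG]; rw [max_eq_right h, min_eq_left h, gg_zero]; ring⟩
  · have h0 : GG n 0 = 0 := by rw [GG_of_nonneg le_rfl, gg_zero]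
    set T := max 1 y with hT
    have hT1 : (1:ℝ) ≤ T := le_max_left _ _
    have hTy : y ≤ T := le_max_right _ _
    have hGT : y ≤ GG n T := by
      rw [GG_of_nonneg (by linarith)]
      have := gg_sq_le hn (t := T) (by linarith)
      nlinarith
    have := intermediate_value_Icc (by linarith : (0:ℝ) ≤ T) ((GG_cont n).continuousOn)
    have hy : y ∈ Set.Icc (GG n 0) (GG n T) := ⟨by rw [h0]; exact h.le, hGT⟩
    obtain ⟨t, _, ht⟩ := this hy
    exact ⟨t, ht⟩

noncomputable def EE (n : ℕ) (hn : 2 ≤ n) : ℝ ≃o ℝ :=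
  StrictMono.orderIsoOfSurjective (GG n) (GG_sm hn) (GG_surj hn)

lemma EE_apply (n : ℕ) (hn : 2 ≤ n) (t : ℝ) : EE n hn t = GG n t := rfl

lemma EE_symm_GG (n : ℕ) (hn : 2 ≤ n) (t : ℝ) : (EE n hn).symm (GG n t) = t := by
  have : (EE n hn).symm (EE n hn t) = t := (EE n hn).symm_apply_apply t
  rwa [EE_apply] at this

lemma GG_EE_symm (n : ℕ) (hn : 2 ≤ n) (y : ℝ) : GG n ((EE n hn).symm y) = y := by
  have : EE n hn ((EE n hn).symm y) = y := (EE n hn).apply_symm_apply y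
  rwa [EE_apply] at this

lemma EE_symm_cont (n : ℕ) (hn : 2 ≤ n) : Continuous ((EE n hn).symm : ℝ → ℝ) :=
  OrderIso.continuous _

lemma EE_symm_sm (n : ℕ) (hn : 2 ≤ n) : StrictMono ((EE n hn).symm : ℝ → ℝ) :=
  (EE n hn).symm.strictMono

noncomputable def SS (n : ℕ) (hn : 2 ≤ n) (u : ℝ) : ℕ → ℝ
  | 0 => 0
  | (j+1) => (EE n hn).symm
      (min (max (Pn' n (SS n hn u j) - ((j:ℝ)+1) * u) (GG n (SS n hn u j))) (gg n 1))

lemma gg_one_pos {n : ℕ} (hn : 2 ≤ n) : 0 < gg n 1 := by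
  have := gg_sq_le hn (t := 1) (by norm_num)
  norm_num at this
  linarith

lemma SS_mem {n : ℕ} (hn : 2 ≤ n) (u : ℝ) : ∀ j, 0 ≤ SS n hn u j ∧ SS n hn u j ≤ 1 := by
  intro j
  induction j with
  | zero => exact ⟨le_rfl, by norm_num [SS]⟩
  | succ j ih =>
    obtain ⟨h0, h1⟩ := ih
    have hgle : GG n (SS n hn u j) ≤ gg n 1 := by
      rw [GG_of_nonneg h0]; exact gg_mono hn h0 h1
    set y := min (max (Pn' n (SS n hn u j) - ((j:ℝ)+1) * u) (GG n (SS n hn u j))) (gg n 1)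
      with hy
    have hylb : GG n (SS n hn u j) ≤ y := le_min (le_max_right _ _) hgle
    have hyub : y ≤ gg n 1 := min_le_right _ _
    constructor
    · have := (EE_symm_sm n hn).monotone hylb
      rw [EE_symm_GG] at this
      show 0 ≤ (EE n hn).symm y
      linarith
    · have hG1 : GG n 1 = gg n 1 := GG_of_nonneg (by norm_num)
      have := (EE_symm_sm n hn).monotone hyub
      rw [← hG1, EE_symm_GG] at this
      exact this

lemma SS_le_succ {n : ℕ} (hn : 2 ≤ n) (u : ℝ) (j : ℕ) :
    SS n hn u j ≤ SS n hn u (j+1) := by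
  obtain ⟨h0, h1⟩ := SS_mem hn u j
  have hgle : GG n (SS n hn u j) ≤ gg n 1 := by
    rw [GG_of_nonneg h0]; exact gg_mono hn h0 h1
  have hylb : GG n (SS n hn u j) ≤
      min (max (Pn' n (SS n hn u j) - ((j:ℝ)+1) * u) (GG n (SS n hn u j))) (gg n 1) :=
    le_min (le_max_right _ _) hgle
  have := (EE_symm_sm n hn).monotone hylb
  rw [EE_symm_GG] at this
  exact this

lemma SS_monotone {n : ℕ} (hn : 2 ≤ n) (u : ℝ) : Monotone (SS n hn u) :=
  monotone_nat_of_le_succ (SS_le_succ hn u)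

lemma SS_cont {n : ℕ} (hn : 2 ≤ n) (j : ℕ) : Continuous (fun u => SS n hn u j) := by
  induction j with
  | zero => exact continuous_const
  | succ j ih =>
    show Continuous fun u => (EE n hn).symm
      (min (max (Pn' n (SS n hn u j) - ((j:ℝ)+1) * u) (GG n (SS n hn u j))) (gg n 1))
    refine (EE_symm_cont n hn).comp ?_
    refine Continuous.min (Continuous.max ?_ ((GG_cont n).comp ih)) continuous_const
    exact ((Pn'_cont n).comp ih).sub (continuous_const.mul continuous_id)

lemma gg_one_ge_one {n : ℕ} (hn : 2 ≤ n) : 1 ≤ gg n 1 := by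
  have := gg_sq_le hn (t := 1) (by norm_num)
  norm_num at this
  exact this

lemma EE_symm_zero (n : ℕ) (hn : 2 ≤ n) : (EE n hn).symm 0 = 0 := by
  have h0 : GG n 0 = 0 := by rw [GG_of_nonneg le_rfl, gg_zero]
  conv_lhs => rw [← h0]
  rw [EE_symm_GG]

lemma SS_one_eq_zero {n : ℕ} (hn : 2 ≤ n) : ∀ j, SS n hn 1 j = 0 := by
  intro j
  induction j with
  | zero => rfl
  | succ j ih =>
    show (EE n hn).symm
      (min (max (Pn' n (SS n hn 1 j) - ((j:ℝ)+1) * 1) (GG n (SS n hn 1 j))) (gg n 1)) = 0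
    rw [ih]
    have hP : Pn' n 0 = 1 := Pn'_zero (by omega)
    have hG : GG n 0 = 0 := by rw [GG_of_nonneg le_rfl, gg_zero]
    rw [hP, hG]
    have hmax : max (1 - ((j:ℝ)+1) * 1) 0 = 0 := by
      apply max_eq_right
      have : (0:ℝ) ≤ (j:ℝ) := Nat.cast_nonneg j
      nlinarith
    rw [hmax, min_eq_left (gg_one_pos hn).le, EE_symm_zero]

lemma SS_u_one {n : ℕ} (hn : 2 ≤ n) {u : ℝ} (hu0 : 0 ≤ u) (hu1 : u ≤ 1) :
    SS n hn u 1 = (EE n hn).symm (1 - u) := by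
  show (EE n hn).symm
      (min (max (Pn' n (SS n hn u 0) - (((0:ℕ):ℝ)+1) * u) (GG n (SS n hn u 0))) (gg n 1)) = _
  have h0 : SS n hn u 0 = 0 := rfl
  rw [h0, Pn'_zero (by omega : 1 ≤ n)]
  have hG : GG n 0 = 0 := by rw [GG_of_nonneg le_rfl, gg_zero]
  rw [hG]
  have hcoef : (1 : ℝ) - (((0:ℕ):ℝ)+1) * u = 1 - u := by norm_num
  rw [hcoef, max_eq_left (by linarith), min_eq_left (by linarith [gg_one_ge_one hn])]

lemma exists_root {n : ℕ} (hn : 2 < n) : ∃ u : ℝ, 0 < u ∧ u < 1 ∧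
    aa n (SS n (le_of_lt hn) u (n-1)) = n * u := by
  have hn2 : 2 ≤ n := le_of_lt hn
  set Φ : ℝ → ℝ := fun u => aa n (SS n hn2 u (n-1)) - n * u with hΦ
  have hcont : Continuous Φ := ((aa_cont n).comp (SS_cont hn2 (n-1))).sub
    (continuous_const.mul continuous_id)
  have hinv : (1:ℝ)/n ≤ 1 := by
    rw [div_le_one (by positivity)]
    exact_mod_cast by omega
  have hΦ1 : Φ 1 < 0 := by
    rw [hΦ]
    simp only [SS_one_eq_zero hn2]
    rw [aa_zero (by omega : 1 ≤ n)]
    have : (2:ℝ) < n := by exact_mod_cast hn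
    norm_num
    linarith
  have hΦinv : 0 < Φ (1/n) := by
    have hu0 : (0:ℝ) < 1/n := by positivity
    have hu1 : (1:ℝ)/n ≤ 1 := hinv
    have hS1 : SS n hn2 (1/n) 1 = (EE n hn2).symm (1 - 1/n) := SS_u_one hn2 hu0.le hu1
    have hS1pos : 0 < SS n hn2 (1/n) 1 := by
      rw [hS1]
      have := (EE_symm_sm n hn2) (show (0:ℝ) < 1 - 1/n by
        have : (1:ℝ)/n ≤ 1/2 := by
          apply div_le_div_of_nonneg_left <;> norm_num
          exact_mod_cast hn2
        linarith)
      rwa [EE_symm_zero] at this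
    have hSn : SS n hn2 (1/n) 1 ≤ SS n hn2 (1/n) (n-1) :=
      SS_monotone hn2 (1/n) (by omega)
    have hmem := SS_mem hn2 (1/n) (n-1)
    have haa : aa n 0 < aa n (SS n hn2 (1/n) (n-1)) := by
      apply aa_sm hn2 (Set.mem_Icc.mpr ⟨le_rfl, by norm_num⟩)
        (Set.mem_Icc.mpr ⟨hmem.1, hmem.2⟩)
      linarith
    rw [aa_zero (by omega : 1 ≤ n)] at haa
    rw [hΦ]
    have : (n:ℝ) * (1/n) = 1 := by field_simp
    simp only []
    rw [this]
    linarith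
  obtain ⟨u, hu, hroot⟩ := intermediate_value_Icc' hinv hcont.continuousOn
    (Set.mem_Icc.mpr ⟨hΦ1.le, hΦinv.le⟩)
  have hu0 : 0 < u := lt_of_lt_of_le (by positivity) hu.1
  have hune : u ≠ 1 := by
    intro h
    rw [h] at hroot
    rw [hroot] at hΦ1
    exact lt_irrefl _ hΦ1
  have hu1 : u < 1 := lt_of_le_of_ne hu.2 hune
  exact ⟨u, hu0, hu1, by
    linarith [show aa n (SS n hn2 u (n-1)) - (n:ℝ)*u = 0 from hroot]⟩

lemma SS_succ (n : ℕ) (hn : 2 ≤ n) (u : ℝ) (j : ℕ) :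
    SS n hn u (j+1) = (EE n hn).symm
      (min (max (Pn' n (SS n hn u j) - ((j:ℝ)+1) * u) (GG n (SS n hn u j))) (gg n 1)) := rfl

lemma GG_SS_le {n : ℕ} (hn : 2 ≤ n) (u : ℝ) (j : ℕ) :
    GG n (SS n hn u j) ≤ gg n 1 := by
  obtain ⟨h0, h1⟩ := SS_mem hn u j
  rw [GG_of_nonneg h0]; exact gg_mono hn h0 h1

lemma SS_succ_stall {n : ℕ} (hn : 2 ≤ n) (u : ℝ) (j : ℕ)
    (h : Pn' n (SS n hn u j) - ((j:ℝ)+1) * u ≤ GG n (SS n hn u j)) :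
    SS n hn u (j+1) = SS n hn u j := by
  rw [SS_succ, max_eq_right h, min_eq_left (GG_SS_le hn u j), EE_symm_GG]

lemma SS_succ_mid {n : ℕ} (hn : 2 ≤ n) (u : ℝ) (j : ℕ)
    (h1 : GG n (SS n hn u j) ≤ Pn' n (SS n hn u j) - ((j:ℝ)+1) * u)
    (h2 : Pn' n (SS n hn u j) - ((j:ℝ)+1) * u ≤ gg n 1) :
    SS n hn u (j+1) = (EE n hn).symm (Pn' n (SS n hn u j) - ((j:ℝ)+1) * u) := by
  rw [SS_succ, max_eq_left h1, min_eq_left h2]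

lemma EE_symm_gg_one (n : ℕ) (hn : 2 ≤ n) : (EE n hn).symm (gg n 1) = 1 := by
  have : GG n 1 = gg n 1 := GG_of_nonneg (by norm_num)
  rw [← this, EE_symm_GG]

lemma SS_succ_top {n : ℕ} (hn : 2 ≤ n) (u : ℝ) (j : ℕ)
    (h : gg n 1 ≤ Pn' n (SS n hn u j) - ((j:ℝ)+1) * u) :
    SS n hn u (j+1) = 1 := by
  rw [SS_succ, min_eq_right (le_trans h (le_max_left _ _)), EE_symm_gg_one]

lemma Pn'_one_sub_gg_one (n : ℕ) : Pn' n 1 - gg n 1 = n := by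
  have h := aa_eq n 1
  rw [aa_one] at h
  linarith

lemma SS_stall {n : ℕ} (hn : 2 ≤ n) {u : ℝ} (hu : 0 < u) {j : ℕ}
    (h : Pn' n (SS n hn u j) - ((j:ℝ)+1) * u ≤ GG n (SS n hn u j)) :
    ∀ m, SS n hn u (j+m) = SS n hn u j := by
  intro m
  induction m with
  | zero => rfl
  | succ m ih =>
    have hm : (0:ℝ) ≤ (m:ℝ) := Nat.cast_nonneg m
    have hx : Pn' n (SS n hn u (j+m)) - (((j+m : ℕ):ℝ)+1) * u ≤ GG n (SS n hn u (j+m)) := by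
      rw [ih]
      push_cast
      nlinarith
    have := SS_succ_stall hn u (j+m) hx
    rw [show j + (m+1) = (j+m)+1 from rfl, this, ih]

lemma SS_ceil {n : ℕ} (hn : 2 ≤ n) {u : ℝ} (hu1 : u < 1) (hu0 : 0 < u) {j : ℕ}
    (hj : SS n hn u j = 1) : ∀ k, j ≤ k → k ≤ n - 1 → SS n hn u k = 1 := by
  intro k hk hkn
  induction k, hk using Nat.le_induction with
  | base => exact hj
  | succ k hk ih =>
    have hkn' : k ≤ n - 1 := by omega
    have hk1 : k + 1 ≤ n - 1 := hkn
    have ihk := ih hkn'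
    have hx : gg n 1 ≤ Pn' n (SS n hn u k) - ((k:ℝ)+1) * u := by
      rw [ihk]
      have hP : Pn' n 1 - gg n 1 = n := Pn'_one_sub_gg_one n
      have hkr : ((k:ℝ)+1) ≤ (n:ℝ) - 1 := by
        have : k + 1 ≤ n - 1 := hk1
        have : (k:ℝ) + 1 ≤ ((n - 1 : ℕ) : ℝ) := by exact_mod_cast this
        have hcast : ((n - 1 : ℕ) : ℝ) = (n:ℝ) - 1 := by
          have : 1 ≤ n := by omega
          push_cast [this]; ring
        linarith [hcast ▸ this]
      have hn1 : (1:ℝ) ≤ (n:ℝ) := by exact_mod_cast (by omega : 1 ≤ n)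
      nlinarith
    exact SS_succ_top hn u k hx

lemma exists_good {n : ℕ} (hn : 2 < n) : ∃ u : ℝ, 0 < u ∧ u < 1 ∧
    aa n (SS n hn.le u (n-1)) = n * u ∧
    (∀ j, j + 1 ≤ n - 1 →
      gg n (SS n hn.le u (j+1)) = Pn' n (SS n hn.le u j) - ((j:ℝ)+1) * u ∧
      SS n hn.le u j < SS n hn.le u (j+1) ∧ SS n hn.le u (j+1) < 1) := by
  have hn2 : 2 ≤ n := hn.le
  obtain ⟨u, hu0, hu1, hroot⟩ := exists_root hn
  have hnR : (2:ℝ) < n := by exact_mod_cast hn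
  -- no lower clamp
  have hlow : ∀ j, j + 1 ≤ n - 1 →
      GG n (SS n hn2 u j) < Pn' n (SS n hn2 u j) - ((j:ℝ)+1) * u := by
    intro j hj
    by_contra hle
    push_neg at hle
    have hstall := SS_stall hn2 hu0 hle ((n-1) - j)
    have hj' : j + ((n-1) - j) = n - 1 := by omega
    rw [hj'] at hstall
    have h0 := (SS_mem hn2 u j).1
    have haaj : aa n (SS n hn2 u j) ≤ ((j:ℝ)+1) * u := by
      rw [aa_eq]
      rw [GG_of_nonneg h0] at hle
      linarith
    rw [hstall] at hroot
    have hjn : ((j:ℝ)+1) ≤ (n:ℝ) - 1 := by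
      have h1 : j + 1 ≤ n - 1 := hj
      have h2 : (j:ℝ) + 1 ≤ ((n-1 : ℕ):ℝ) := by exact_mod_cast h1
      have h3 : ((n-1 : ℕ):ℝ) = (n:ℝ) - 1 := by
        push_cast [show 1 ≤ n by omega]; ring
      linarith [h3 ▸ h2]
    nlinarith
  -- no upper clamp
  have hhigh : ∀ j, j + 1 ≤ n - 1 →
      Pn' n (SS n hn2 u j) - ((j:ℝ)+1) * u < gg n 1 := by
    intro j hj
    by_contra hge
    push_neg at hge
    have h1 : SS n hn2 u (j+1) = 1 := SS_succ_top hn2 u j hge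
    have hceil := SS_ceil hn2 hu1 hu0 h1 (n-1) (by omega) le_rfl
    rw [hceil, aa_one] at hroot
    have : u = 1 := by
      have : (n:ℝ) ≠ 0 := by positivity
      field_simp at hroot
      nlinarith
    linarith
  refine ⟨u, hu0, hu1, hroot, fun j hj => ?_⟩
  have h1 := hlow j hj
  have h2 := hhigh j hj
  have hmid := SS_succ_mid hn2 u j h1.le h2.le
  have hgeq : gg n (SS n hn2 u (j+1)) = Pn' n (SS n hn2 u j) - ((j:ℝ)+1) * u := by
    rw [← GG_of_nonneg (SS_mem hn2 u (j+1)).1, hmid, GG_EE_symm]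
  refine ⟨hgeq, ?_, ?_⟩
  · have := EE_symm_sm n hn2 h1
    rw [EE_symm_GG] at this
    rw [hmid]
    exact this
  · have := EE_symm_sm n hn2 h2
    rw [EE_symm_gg_one] at this
    rw [hmid]
    exact this

lemma aa_form (n : ℕ) (t : ℝ) : (1 - t) * Pn' n t + Pn n t = Pn' n t - gg n t :=
  aa_eq n t

lemma sol_step {n : ℕ} {ζ : ℝ} {ε : ℕ → ℝ} (hrec : Recurrence n ζ ε) :
    ∀ j, 1 ≤ j → j ≤ n - 1 →
      gg n (1 - ε (j+1)) = Pn' n (1 - ε j) - (j:ℝ)/ζ := by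
  intro j hj1 hjn
  have h := aa_form n (1 - ε (j+1))
  have e : (1 : ℝ) - (1 - ε (j+1)) = ε (j+1) := by ring
  rw [e] at h
  linarith [hrec j hj1 hjn, h]

lemma sol_mono {n : ℕ} {ε : ℕ → ℝ} (hdec : ∀ j, 1 ≤ j → j < n → ε (j+1) < ε j) :
    ∀ j k, 1 ≤ j → j ≤ k → k ≤ n → ε k ≤ ε j := by
  intro j k hj hjk hkn
  induction k, hjk using Nat.le_induction with
  | base => exact le_refl _
  | succ k hk ih =>
    have h1 : 1 ≤ k := le_trans hj hk
    have h2 : k < n := by omega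
    have := hdec k h1 h2
    have := ih (by omega)
    linarith

lemma sol_bounds {n : ℕ} {ε : ℕ → ℝ} (h1 : ε 1 = 1) (hn0 : 0 ≤ ε n)
    (hdec : ∀ j, 1 ≤ j → j < n → ε (j+1) < ε j) :
    ∀ j, 1 ≤ j → j ≤ n → 0 ≤ 1 - ε j ∧ 1 - ε j ≤ 1 := by
  intro j hj1 hjn
  have ha := sol_mono hdec 1 j le_rfl hj1 hjn
  have hb := sol_mono hdec j n hj1 hjn le_rfl
  rw [h1] at ha
  constructor <;> linarith

lemma sol_final {n : ℕ} {ζ : ℝ} {ε : ℕ → ℝ} (hζ : 1 < ζ)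
    (hzeq : ζ = n / (ε n * Pn' n (1 - ε n) + Pn n (1 - ε n))) :
    aa n (1 - ε n) = n / ζ := by
  have hD : aa n (1 - ε n) = ε n * Pn' n (1 - ε n) + Pn n (1 - ε n) := by
    unfold aa; ring_nf
  rcases eq_or_ne (ε n * Pn' n (1 - ε n) + Pn n (1 - ε n)) 0 with h0 | h0
  · rw [h0] at hzeq; simp at hzeq; rw [hzeq] at hζ; norm_num at hζ
  · rw [hD]
    have hζ0 : ζ ≠ 0 := by linarith
    field_simp at hzeq ⊢
    linarith [hzeq]

lemma uniq_aux {n : ℕ} (hn : 2 < n) {ζ ζ' : ℝ} (hζ : 1 < ζ) (hζ' : 1 < ζ')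
    (hlt : ζ < ζ')
    (h : ∃ ε : ℕ → ℝ, Recurrence n ζ ε ∧ ε 1 = 1 ∧ 0 ≤ ε n ∧
      (∀ j, 1 ≤ j → j < n → ε (j+1) < ε j) ∧
      ζ = (n : ℝ) / (ε n * Pn' n (1 - ε n) + Pn n (1 - ε n)))
    (h' : ∃ ε : ℕ → ℝ, Recurrence n ζ' ε ∧ ε 1 = 1 ∧ 0 ≤ ε n ∧
      (∀ j, 1 ≤ j → j < n → ε (j+1) < ε j) ∧
      ζ' = (n : ℝ) / (ε n * Pn' n (1 - ε n) + Pn n (1 - ε n))) : False := by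
  obtain ⟨ε, hrec, h1, hn0, hdec, hzeq⟩ := h
  obtain ⟨ε', hrec', h1', hn0', hdec', hzeq'⟩ := h'
  have hn2 : 2 ≤ n := hn.le
  have hb := sol_bounds h1 hn0 hdec
  have hb' := sol_bounds h1' hn0' hdec'
  have hζ0 : (0:ℝ) < ζ := by linarith
  have hζ'0 : (0:ℝ) < ζ' := by linarith
  have cmp : ∀ k, 2 ≤ k → k ≤ n → 1 - ε k < 1 - ε' k := by
    intro k hk2 hkn
    induction k, hk2 using Nat.le_induction with
    | base =>
      have hs := sol_step hrec 1 le_rfl (by omega)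
      have hs' := sol_step hrec' 1 le_rfl (by omega)
      rw [h1] at hs; rw [h1'] at hs'
      norm_num at hs hs'
      rw [Pn'_zero (by omega : 1 ≤ n)] at hs hs'
      have hdiv : ζ'⁻¹ < ζ⁻¹ := by
        rw [← one_div, ← one_div]
        exact one_div_lt_one_div_of_lt hζ0 hlt
      have hgg : gg n (1 - ε 2) < gg n (1 - ε' 2) := by rw [hs, hs']; linarith
      by_contra hc
      push_neg at hc
      have := gg_mono hn2 (hb' 2 (by omega) (by omega)).1 hc
      linarith
    | succ k hk ih =>
      have hkn' : k ≤ n := by omega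
      have ihk := ih hkn'
      have hs := sol_step hrec k (by omega) (by omega)
      have hs' := sol_step hrec' k (by omega) (by omega)
      have hP : Pn' n (1 - ε k) < Pn' n (1 - ε' k) :=
        Pn'_sm hn2 (hb k (by omega) hkn').1 ihk
      have hk0 : (0:ℝ) < (k:ℝ) := by positivity
      have hdiv : (k:ℝ)/ζ' < (k:ℝ)/ζ := div_lt_div_of_pos_left hk0 hζ0 hlt
      have hgg : gg n (1 - ε (k+1)) < gg n (1 - ε' (k+1)) := by
        rw [hs, hs']; linarith
      by_contra hc
      push_neg at hc
      have := gg_mono hn2 (hb' (k+1) (by omega) (by omega)).1 hc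
      linarith
  have hcn := cmp n hn2 le_rfl
  have haa : aa n (1 - ε n) < aa n (1 - ε' n) := by
    apply aa_sm hn2 (Set.mem_Icc.mpr (hb n (by omega) le_rfl))
      (Set.mem_Icc.mpr (hb' n (by omega) le_rfl)) hcn
  rw [sol_final hζ hzeq, sol_final hζ' hzeq'] at haa
  have hnpos : (0:ℝ) < n := by positivity
  have : (n:ℝ)/ζ' < (n:ℝ)/ζ := div_lt_div_of_pos_left hnpos hζ0 hlt
  linarith

/-- For every integer `n > 2` there is a unique `ζ_n > 1` admitting a
solution `ε_1, …, ε_n` of (★) with `0 ≤ ε_n < ε_{n-1} < … < ε_2 < ε_1 = 1` and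
`ζ_n = n / (ε_n P_n'(1-ε_n) + P_n(1-ε_n))`. -/
theorem stmt_4 (n : ℕ) (hn : 2 < n) :
    ∃! ζ : ℝ, 1 < ζ ∧ ∃ ε : ℕ → ℝ,
      Recurrence n ζ ε ∧ ε 1 = 1 ∧ 0 ≤ ε n ∧
      (∀ j, 1 ≤ j → j < n → ε (j+1) < ε j) ∧
      ζ = (n : ℝ) / (ε n * Pn' n (1 - ε n) + Pn n (1 - ε n)) := by
  have hn2 : 2 ≤ n := hn.le
  obtain ⟨u, hu0, hu1, hroot, hstep⟩ := exists_good hn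
  set s : ℕ → ℝ := SS n hn.le u with hs
  set ζ : ℝ := 1/u with hζdef
  have hu0' : u ≠ 0 := ne_of_gt hu0
  have hζ1 : 1 < ζ := by rw [hζdef, lt_div_iff₀ hu0]; linarith
  set ε : ℕ → ℝ := fun j => 1 - s (j - 1) with hε
  have hsub : ∀ j : ℕ, 1 - ε j = s (j - 1) := by intro j; rw [hε]; ring
  have hnR : (0:ℝ) < n := by positivity
  refine ⟨ζ, ⟨hζ1, ε, ?_, ?_, ?_, ?_, ?_⟩, ?_⟩
  · -- Recurrence
    intro j hj1 hjn
    have hidx : (j - 1) + 1 = j := by omega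
    have hstepj := (hstep (j-1) (by omega)).1
    rw [hidx] at hstepj
    have hcast : ((j-1 : ℕ):ℝ) + 1 = (j:ℝ) := by
      rw [Nat.cast_sub hj1]; ring
    rw [hcast] at hstepj
    have e1 : 1 - ε (j+1) = s j := by rw [hsub]; norm_num
    have e2 : 1 - ε j = s (j-1) := hsub j
    rw [e1, e2]
    have e3 : ε (j+1) = 1 - s j := by rw [← e1]; ring
    rw [e3]
    have hform := aa_form n (s j)
    have hdivζ : (j:ℝ) / ζ = (j:ℝ) * u := by
      rw [hζdef]; field_simp
    rw [hdivζ]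
    linarith [hstepj, hform]
  · -- ε 1 = 1
    rw [hε]
    norm_num
    rfl
  · -- 0 ≤ ε n
    rw [hε]
    simp only []
    linarith [(SS_mem hn2 u (n-1)).2]
  · -- decreasing
    intro j hj1 hjn
    have hstepj := (hstep (j-1) (by omega)).2.1
    have hidx : (j - 1) + 1 = j := by omega
    rw [hidx] at hstepj
    rw [hε]
    simp only []
    have : (j + 1) - 1 = j := by omega
    rw [this]
    linarith [hstepj]
  · -- ζ formula
    have e1 : 1 - ε n = s (n-1) := hsub n
    have e2 : ε n = 1 - s (n-1) := by rw [← e1]; ring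
    rw [e1, e2]
    have hform : (1 - s (n-1)) * Pn' n (s (n-1)) + Pn n (s (n-1)) = aa n (s (n-1)) := rfl
    rw [hform, hroot, hζdef]
    rw [eq_div_iff (by positivity : (n:ℝ) * u ≠ 0)]
    field_simp
  · -- uniqueness
    intro y hy
    obtain ⟨hy1, hyex⟩ := hy
    by_contra hne
    have hζex : ∃ ε : ℕ → ℝ, Recurrence n ζ ε ∧ ε 1 = 1 ∧ 0 ≤ ε n ∧
      (∀ j, 1 ≤ j → j < n → ε (j+1) < ε j) ∧
      ζ = (n : ℝ) / (ε n * Pn' n (1 - ε n) + Pn n (1 - ε n)) := by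
      refine ⟨ε, ?_, ?_, ?_, ?_, ?_⟩
      · intro j hj1 hjn
        have hidx : (j - 1) + 1 = j := by omega
        have hstepj := (hstep (j-1) (by omega)).1
        rw [hidx] at hstepj
        have hcast : ((j-1 : ℕ):ℝ) + 1 = (j:ℝ) := by
          rw [Nat.cast_sub hj1]; ring
        rw [hcast] at hstepj
        have e1 : 1 - ε (j+1) = s j := by rw [hsub]; norm_num
        have e2 : 1 - ε j = s (j-1) := hsub j
        rw [e1, e2]
        have e3 : ε (j+1) = 1 - s j := by rw [← e1]; ring
        rw [e3]
        have hform := aa_form n (s j)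
        have hdivζ : (j:ℝ) / ζ = (j:ℝ) * u := by
          rw [hζdef]; field_simp
        rw [hdivζ]
        linarith [hstepj, hform]
      · rw [hε]; norm_num; rfl
      · rw [hε]; simp only []; linarith [(SS_mem hn2 u (n-1)).2]
      · intro j hj1 hjn
        have hstepj := (hstep (j-1) (by omega)).2.1
        have hidx : (j - 1) + 1 = j := by omega
        rw [hidx] at hstepj
        rw [hε]; simp only []
        have : (j + 1) - 1 = j := by omega
        rw [this]
        linarith [hstepj]
      · have e1 : 1 - ε n = s (n-1) := hsub n
        have e2 : ε n = 1 - s (n-1) := by rw [← e1]; ring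
        rw [e1, e2]
        have hform : (1 - s (n-1)) * Pn' n (s (n-1)) + Pn n (s (n-1)) = aa n (s (n-1)) := rfl
        rw [hform, hroot, hζdef]
        rw [eq_div_iff (by positivity : (n:ℝ) * u ≠ 0)]
        field_simp
    rcases lt_or_gt_of_ne hne with h | h
    · exact uniq_aux hn hy1 hζ1 h hyex hζex
    · exact uniq_aux hn hζ1 hy1 h hζex hyex
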